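/- Let G be a finite simple graph with ivs_χ(G) > vs_χ(G) and 2·χ(G) ≥ Δ(G) + 2. Then |V(G)| ≥ 9, ivs_χ(G) ≥ 3, vs_χ(G) ≥ 2 and χ(G) ≥ 3. -/

import Mathlib

/-- The chromatic number of `G` as a natural number. -/
noncomputable def chi {V : Type*} [Fintype V] (G : SimpleGraph V) : ℕ :=
  G.chromaticNumber.toNat

/-- The maximum degree of `G` (classical version, no decidability assumptions). -/
noncomputable def maxDeg {V : Type*} [Fintype V] (G : SimpleGraph V) : ℕ :=
  @SimpleGraph.maxDegree V G _ (Classical.decRel _)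

/-- The degree of a vertex `v` of `G` (classical version). -/
noncomputable def deg {V : Type*} [Fintype V] (G : SimpleGraph V) (v : V) : ℕ :=
  @SimpleGraph.degree V G v (@SimpleGraph.neighborSetFintype V G _ (Classical.decRel _) v)

/-- The chromatic vertex stability of `G`: the minimum size of a set `S` of vertices
such that the subgraph induced on the complement of `S` has chromatic number `χ(G) - 1`. -/
noncomputable def vsChi {V : Type*} [Fintype V] [DecidableEq V] (G : SimpleGraph V) : ℕ :=
  sInf {n : ℕ | ∃ S : Finset V, S.card = n ∧
    chi (G.induce (↑(Sᶜ) : Set V)) = chi G - 1}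

/-- The independent chromatic vertex stability of `G`: the minimum size of an independent
set `S` of vertices such that the subgraph induced on the complement of `S` has chromatic
number `χ(G) - 1`. -/
noncomputable def ivsChi {V : Type*} [Fintype V] [DecidableEq V] (G : SimpleGraph V) : ℕ :=
  sInf {n : ℕ | ∃ S : Finset V, S.card = n ∧
    (∀ x ∈ S, ∀ y ∈ S, ¬ G.Adj x y) ∧
    chi (G.induce (↑(Sᶜ) : Set V)) = chi G - 1}

open SimpleGraph Finset

section helpers
variable {V : Type*} [Fintype V] [DecidableEq V]

lemma chi_le_iff {G : SimpleGraph V} {n : ℕ} : chi G ≤ n ↔ G.Colorable n := by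
  constructor
  · intro h
    exact (G.colorable_chromaticNumber_of_fintype).mono h
  · intro h
    exact ENat.toNat_le_of_le_coe h.chromaticNumber_le

lemma chi_colorable (G : SimpleGraph V) : G.Colorable (chi G) :=
  G.colorable_chromaticNumber_of_fintype

/-- membership in the complement coercion -/
lemma mem_compl_coe {S : Finset V} {x : V} : x ∈ (↑(Sᶜ) : Set V) ↔ x ∉ S := by
  simp

/-- If `S` is independent, then `chi G ≤ chi (G - S) + 1`. -/
lemma chi_le_induce_compl_add_one (G : SimpleGraph V) (S : Finset V)
    (hind : ∀ x ∈ S, ∀ y ∈ S, ¬ G.Adj x y) :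
    chi G ≤ chi (G.induce (↑(Sᶜ) : Set V)) + 1 := by
  obtain ⟨c⟩ := chi_colorable (G.induce (↑(Sᶜ) : Set V))
  rw [chi_le_iff]
  set m := chi (G.induce (↑(Sᶜ) : Set V))
  have : G.Coloring (Option (Fin m)) := by
    refine SimpleGraph.Coloring.mk
      (fun v => if h : v ∈ S then none else some (c ⟨v, mem_compl_coe.2 h⟩)) ?_
    intro v w hadj
    by_cases hv : v ∈ S <;> by_cases hw : w ∈ S
    · exact absurd hadj (hind v hv w hw)
    · simp [hv, hw]
    · simp [hv, hw]
    · simp only [dif_neg hv, dif_neg hw, ne_eq, Option.some.injEq]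
      exact c.valid (v := ⟨v, mem_compl_coe.2 hv⟩) (w := ⟨w, mem_compl_coe.2 hw⟩)
        (by exact hadj)
  have hcol : G.Colorable (Fintype.card (Option (Fin m))) := this.colorable
  simpa using hcol

/-- Removing a color class drops chi by exactly one. -/
lemma colorClass_spec (G : SimpleGraph V) (hc : 1 ≤ chi G)
    (c : G.Coloring (Fin (chi G))) (i : Fin (chi G)) :
    (∀ x ∈ Finset.univ.filter (fun v => c v = i),
      ∀ y ∈ Finset.univ.filter (fun v => c v = i), ¬ G.Adj x y) ∧
    chi (G.induce (↑((Finset.univ.filter (fun v => c v = i))ᶜ) : Set V)) = chi G - 1 := by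
  set S := Finset.univ.filter (fun v => c v = i) with hS
  have hind : ∀ x ∈ S, ∀ y ∈ S, ¬ G.Adj x y := by
    intro x hx y hy hadj
    have hx' : c x = i := by simpa [hS] using hx
    have hy' : c y = i := by simpa [hS] using hy
    exact c.valid hadj (hx'.trans hy'.symm)
  refine ⟨hind, ?_⟩
  have hle : chi (G.induce (↑(Sᶜ) : Set V)) ≤ chi G - 1 := by
    rw [chi_le_iff]
    have : (G.induce (↑(Sᶜ) : Set V)).Coloring {j : Fin (chi G) // j ≠ i} := by
      refine SimpleGraph.Coloring.mk (fun v => ⟨c v.1, ?_⟩) ?_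
      · have : v.1 ∉ S := by
          have := v.2; simpa using this
        simpa [hS] using this
      · intro v w hadj
        simp only [ne_eq, Subtype.mk.injEq]
        exact c.valid (by exact hadj)
    have hcol := this.colorable
    have hcard : Fintype.card {j : Fin (chi G) // j ≠ i} = chi G - 1 := by
      simp [Fintype.card_subtype_compl]
    rwa [hcard] at hcol
  have hge : chi G - 1 ≤ chi (G.induce (↑(Sᶜ) : Set V)) := by
    have := chi_le_induce_compl_add_one G S hind
    omega
  omega

/-- chi of an induced graph on the complement equals one iff the complement is a nonempty
independent set. -/
lemma chi_induce_eq_one_iff (G : SimpleGraph V) (S : Finset V) :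
    chi (G.induce (↑(Sᶜ) : Set V)) = 1 ↔
      (∃ v, v ∉ S) ∧ ∀ x y, x ∉ S → y ∉ S → ¬ G.Adj x y := by
  constructor
  · intro h
    obtain ⟨c⟩ := chi_colorable (G.induce (↑(Sᶜ) : Set V))
    have hne : Nonempty (↑(Sᶜ) : Set V) := by
      by_contra hE
      rw [not_nonempty_iff] at hE
      have := SimpleGraph.chromaticNumber_eq_zero_of_isEmpty (G := G.induce (↑(Sᶜ) : Set V))
      simp [chi, this] at h
    obtain ⟨⟨v, hv⟩⟩ := hne
    refine ⟨⟨v, by simpa using hv⟩, ?_⟩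
    intro x y hx hy hadj
    rw [h] at c
    have := c.valid (v := (⟨x, by simpa using hx⟩ : (↑(Sᶜ) : Set V)))
      (w := ⟨y, by simpa using hy⟩) (by exact hadj)
    exact this (Subsingleton.elim _ _)
  · rintro ⟨⟨v, hv⟩, hind⟩
    have hle : chi (G.induce (↑(Sᶜ) : Set V)) ≤ 1 := by
      rw [chi_le_iff]
      refine ⟨SimpleGraph.Coloring.mk (fun _ => 0) ?_⟩
      intro x y hadj
      exact absurd hadj (hind x.1 y.1 (by simpa using x.2) (by simpa using y.2))
    have hge : 1 ≤ chi (G.induce (↑(Sᶜ) : Set V)) := by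
      have hne : Nonempty (↑(Sᶜ) : Set V) := ⟨⟨v, by simpa using hv⟩⟩
      by_contra hlt
      have h0 : chi (G.induce (↑(Sᶜ) : Set V)) = 0 := by omega
      have := chi_colorable (G.induce (↑(Sᶜ) : Set V))
      rw [h0] at this
      obtain ⟨c⟩ := this
      exact (Fin.elim0 (c (Classical.arbitrary _)))
    omega
  end helpers

section helpers2
variable {V : Type*} [Fintype V] [DecidableEq V]

lemma fin2_cases : ∀ a b : Fin 2, a ≠ b → a = 1 ∨ b = 1 := by decide
lemma fin2_zero : ∀ a : Fin 2, a ≠ 1 → a = 0 := by decide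

lemma exists_small_class (G : SimpleGraph V) (hc : 1 ≤ chi G)
    (c : G.Coloring (Fin (chi G))) :
    ∃ i : Fin (chi G),
      chi G * (Finset.univ.filter (fun v => c v = i)).card ≤ Fintype.card V := by
  have hpos : 0 < chi G := hc
  have hne : (Finset.univ : Finset (Fin (chi G))).Nonempty := by
    have : Nonempty (Fin (chi G)) := ⟨⟨0, hpos⟩⟩
    exact Finset.univ_nonempty
  obtain ⟨i, -, hmin⟩ := Finset.exists_min_image Finset.univ
    (fun j => (Finset.univ.filter (fun v => c v = j)).card) hne
  refine ⟨i, ?_⟩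
  have hsum : Fintype.card V
      = ∑ j : Fin (chi G), (Finset.univ.filter (fun v => c v = j)).card := by
    rw [← Finset.card_univ]
    exact Finset.card_eq_sum_card_fiberwise (fun x _ => Finset.mem_univ _)
  calc chi G * (Finset.univ.filter (fun v => c v = i)).card
      = ∑ _j : Fin (chi G), (Finset.univ.filter (fun v => c v = i)).card := by
        rw [Finset.sum_const, Finset.card_univ, Fintype.card_fin, smul_eq_mul]
    _ ≤ ∑ j : Fin (chi G), (Finset.univ.filter (fun v => c v = j)).card :=
        Finset.sum_le_sum (fun j hj => hmin j hj)
    _ = Fintype.card V := hsum.symm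

end helpers2


/-- If `ivs_χ(G) > vs_χ(G)` and `2χ(G) ≥ Δ(G) + 2`, then `|V(G)| ≥ 9`, `ivs_χ(G) ≥ 3`,
`vs_χ(G) ≥ 2` and `χ(G) ≥ 3`. -/
theorem stmt_4 {V : Type*} [Fintype V] [DecidableEq V] (G : SimpleGraph V)
    (h1 : ivsChi G > vsChi G) (h2 : 2 * chi G ≥ maxDeg G + 2) :
    Fintype.card V ≥ 9 ∧ ivsChi G ≥ 3 ∧ vsChi G ≥ 2 ∧ chi G ≥ 3 := by
  classical
  have hmem_ivs : ∀ S : Finset V, (∀ x ∈ S, ∀ y ∈ S, ¬ G.Adj x y) →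
      chi (G.induce (↑(Sᶜ) : Set V)) = chi G - 1 → ivsChi G ≤ S.card := by
    intro S hi hcc
    exact Nat.sInf_le ⟨S, rfl, hi, hcc⟩
  have hmem_vs : ∀ S : Finset V, chi (G.induce (↑(Sᶜ) : Set V)) = chi G - 1 →
      vsChi G ≤ S.card := fun S h => Nat.sInf_le ⟨S, rfl, h⟩
  -- chi G ≥ 1
  have hchi1 : 1 ≤ chi G := by
    by_contra h
    have h0 : chi G = 0 := by omega
    have hEV : IsEmpty V := by
      obtain ⟨c⟩ := chi_colorable G
      rw [h0] at c
      exact ⟨fun v => Fin.elim0 (c v)⟩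
    have hE : chi (G.induce (↑((∅ : Finset V)ᶜ) : Set V)) = chi G - 1 := by
      have : IsEmpty (↑((∅ : Finset V)ᶜ) : Set V) := ⟨fun x => hEV.elim x.1⟩
      rw [h0]
      simp [chi, SimpleGraph.chromaticNumber_eq_zero_of_isEmpty]
    have := hmem_ivs ∅ (by simp) hE
    simp at this
    omega
  obtain ⟨c⟩ := chi_colorable G
  have hvs_spec := colorClass_spec G hchi1 c
  have hvs_ne : {n : ℕ | ∃ S : Finset V, S.card = n ∧
      chi (G.induce (↑(Sᶜ) : Set V)) = chi G - 1}.Nonempty :=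
    ⟨_, _, rfl, (hvs_spec ⟨0, hchi1⟩).2⟩
  have hvsmem : ∃ S : Finset V, S.card = vsChi G ∧
      chi (G.induce (↑(Sᶜ) : Set V)) = chi G - 1 := Nat.sInf_mem hvs_ne
  obtain ⟨S₀, hS₀card, hS₀⟩ := hvsmem
  -- vs ≥ 2
  have hvs2 : 2 ≤ vsChi G := by
    by_contra h
    have hcard : S₀.card ≤ 1 := by omega
    have hind : ∀ x ∈ S₀, ∀ y ∈ S₀, ¬ G.Adj x y := by
      intro x hx y hy hadj
      have hxy := Finset.card_le_one.mp hcard x hx y hy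
      exact G.loopless.irrefl x (hxy ▸ hadj)
    have := hmem_ivs S₀ hind hS₀
    omega
  have hivs3 : 3 ≤ ivsChi G := by omega
  -- chi ≥ 3
  have hchi3 : 3 ≤ chi G := by
    by_contra h
    have hc12 : chi G = 1 ∨ chi G = 2 := by omega
    rcases hc12 with hc | hc
    · -- chi = 1 : G is edgeless
      have hedgeless : ∀ x y : V, ¬ G.Adj x y := by
        intro x y hadj
        obtain ⟨c1⟩ : G.Colorable 1 := chi_le_iff.mp (by omega)
        exact c1.valid hadj (Subsingleton.elim _ _)
      have := hmem_ivs S₀ (fun x _ y _ => hedgeless x y) hS₀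
      omega
    · -- chi = 2 : swap argument
      have hD : maxDeg G ≤ 2 := by omega
      obtain ⟨c2⟩ : G.Colorable 2 := chi_le_iff.mp (by omega)
      have hchar : ∀ S : Finset V, chi (G.induce (↑(Sᶜ) : Set V)) = chi G - 1 ↔
          ((∃ v, v ∉ S) ∧ ∀ x y, x ∉ S → y ∉ S → ¬ G.Adj x y) := by
        intro S
        rw [hc]
        exact chi_induce_eq_one_iff G S
      set A := {k : ℕ | ∃ S : Finset V, S.card = vsChi G ∧
          chi (G.induce (↑(Sᶜ) : Set V)) = chi G - 1 ∧
          (S.filter (fun w => c2 w = 1)).card = k} with hA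
      have hAne : A.Nonempty := ⟨_, S₀, hS₀card, hS₀, rfl⟩
      obtain ⟨S, hScard, hSok, hSk⟩ := Nat.sInf_mem hAne
      have hSind : ∀ x ∈ S, ∀ y ∈ S, ¬ G.Adj x y := by
        intro x hx y hy hadj
        have key : ∀ u v : V, u ∈ S → v ∈ S → G.Adj u v → c2 v = 1 → False := by
          intro u v hu hv huv hv1
          obtain ⟨⟨w₀, hw₀⟩, hout⟩ := (hchar S).mp hSok
          -- v has a neighbor outside S
          have hvout : ∃ v', v' ∉ S ∧ G.Adj v v' := by
            by_contra hall
            push_neg at hall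
            have hok' : chi (G.induce (↑((S.erase v)ᶜ) : Set V)) = chi G - 1 := by
              rw [hchar]
              refine ⟨⟨w₀, fun hmem => hw₀ (Finset.mem_of_mem_erase hmem)⟩, ?_⟩
              intro a b ha hb hab
              have ha' : a ∉ S ∨ a = v := by
                by_cases haS : a ∈ S
                · right
                  by_contra hne
                  exact ha (Finset.mem_erase.mpr ⟨hne, haS⟩)
                · left; exact haS
              have hb' : b ∉ S ∨ b = v := by
                by_cases hbS : b ∈ S
                · right
                  by_contra hne
                  exact hb (Finset.mem_erase.mpr ⟨hne, hbS⟩)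
                · left; exact hbS
              rcases ha' with ha' | rfl
              · rcases hb' with hb' | rfl
                · exact hout a b ha' hb' hab
                · exact hall a ha' hab.symm
              · rcases hb' with hb' | rfl
                · exact hall b hb' hab
                · exact G.loopless.irrefl _ hab
            have hle := hmem_vs (S.erase v) hok'
            rw [Finset.card_erase_of_mem hv, hScard] at hle
            omega
          obtain ⟨v', hv'S, hvv'⟩ := hvout
          have hvv'ne : v ≠ v' := fun hh => hv'S (hh ▸ hv)
          have hv'0 : c2 v' = 0 :=
            fin2_zero (c2 v') (fun hh => c2.valid hvv' (by rw [hv1, hh]))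
          -- v has degree at most 2, so its only neighbors are u and v'
          have hdegv : @SimpleGraph.degree V G v
              (@SimpleGraph.neighborSetFintype V G _ (Classical.decRel _) v) ≤ 2 :=
            le_trans (@SimpleGraph.degree_le_maxDegree V G _ (Classical.decRel _) v) hD
          have hnbrs : ∀ w, G.Adj v w → w = u ∨ w = v' := by
            intro w hw
            by_contra hcon
            push_neg at hcon
            obtain ⟨hwu, hwv'⟩ := hcon
            have hucv' : u ≠ v' := fun hh => hv'S (hh ▸ hu)
            have hsub : {u, v', w} ⊆ @SimpleGraph.neighborFinset V G v
                (@SimpleGraph.neighborSetFintype V G _ (Classical.decRel _) v) := by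
              intro z hz
              rw [SimpleGraph.mem_neighborFinset]
              simp only [Finset.mem_insert, Finset.mem_singleton] at hz
              rcases hz with rfl | rfl | rfl
              · exact huv.symm
              · exact hvv'
              · exact hw
            have hcard3 : ({u, v', w} : Finset V).card = 3 :=
              Finset.card_eq_three.mpr ⟨u, v', w, hucv', Ne.symm hwu, Ne.symm hwv', rfl⟩
            have hge3 := Finset.card_le_card hsub
            rw [hcard3] at hge3
            have hdd : (@SimpleGraph.neighborFinset V G v
                (@SimpleGraph.neighborSetFintype V G _ (Classical.decRel _) v)).card
                = @SimpleGraph.degree V G v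
                (@SimpleGraph.neighborSetFintype V G _ (Classical.decRel _) v) := rfl
            rw [hdd] at hge3
            omega
          -- the swapped set
          set S₁ := insert v' (S.erase v) with hS₁
          have hv'nem : v' ∉ S.erase v := fun hh => hv'S (Finset.mem_of_mem_erase hh)
          have hS₁card : S₁.card = vsChi G := by
            rw [hS₁, Finset.card_insert_of_notMem hv'nem, Finset.card_erase_of_mem hv]
            omega
          have hvnotS₁ : v ∉ S₁ := by
            rw [hS₁, Finset.mem_insert]
            rintro (hh | hh)
            · exact hvv'ne hh
            · exact (Finset.mem_erase.mp hh).1 rfl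
          have huS₁ : u ∈ S₁ := by
            rw [hS₁]
            exact Finset.mem_insert_of_mem (Finset.mem_erase.mpr ⟨G.ne_of_adj huv, hu⟩)
          have hS₁ok : chi (G.induce (↑(S₁ᶜ) : Set V)) = chi G - 1 := by
            rw [hchar]
            refine ⟨⟨v, hvnotS₁⟩, ?_⟩
            intro a b ha hb hab
            have ha' : a ∉ S ∨ a = v := by
              by_cases haS : a ∈ S
              · right
                by_contra hne
                refine ha ?_
                rw [hS₁]
                exact Finset.mem_insert_of_mem (Finset.mem_erase.mpr ⟨hne, haS⟩)
              · left; exact haS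
            have hb' : b ∉ S ∨ b = v := by
              by_cases hbS : b ∈ S
              · right
                by_contra hne
                refine hb ?_
                rw [hS₁]
                exact Finset.mem_insert_of_mem (Finset.mem_erase.mpr ⟨hne, hbS⟩)
              · left; exact hbS
            have hav' : a ≠ v' := fun hh => ha (by rw [hS₁, hh]; exact Finset.mem_insert_self _ _)
            have hbv' : b ≠ v' := fun hh => hb (by rw [hS₁, hh]; exact Finset.mem_insert_self _ _)
            rcases ha' with ha' | rfl
            · rcases hb' with hb' | rfl
              · exact hout a b ha' hb' hab
              · rcases hnbrs a hab.symm with rfl | rfl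
                · exact ha huS₁
                · exact hav' rfl
            · rcases hb' with hb' | rfl
              · rcases hnbrs b hab with rfl | rfl
                · exact hb huS₁
                · exact hbv' rfl
              · exact G.loopless.irrefl _ hab
          have hvfilter : v ∈ S.filter (fun w => c2 w = 1) := Finset.mem_filter.mpr ⟨hv, hv1⟩
          have hk1 : 1 ≤ (S.filter (fun w => c2 w = 1)).card :=
            Finset.card_pos.mpr ⟨v, hvfilter⟩
          have hS₁filter : (S₁.filter (fun w => c2 w = 1)).card
              = (S.filter (fun w => c2 w = 1)).card - 1 := by
            rw [hS₁, Finset.filter_insert, if_neg (by simp [hv'0]), Finset.filter_erase,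
              Finset.card_erase_of_mem hvfilter]
          have hmemA : (S.filter (fun w => c2 w = 1)).card - 1 ∈ A :=
            ⟨S₁, hS₁card, hS₁ok, hS₁filter⟩
          have hinf := Nat.sInf_le hmemA
          omega
        rcases fin2_cases _ _ (c2.valid hadj) with h1' | h1'
        · exact key y x hy hx hadj.symm h1'
        · exact key x y hx hy hadj h1'
      have := hmem_ivs S hSind hSok
      omega
  -- card ≥ 9
  obtain ⟨i, hi⟩ := exists_small_class G hchi1 c
  have hivs_le := hmem_ivs _ (hvs_spec i).1 (hvs_spec i).2
  have h9 : 9 ≤ Fintype.card V := by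
    have h33 : 3 * 3 ≤ chi G * ivsChi G := Nat.mul_le_mul hchi3 hivs3
    have := Nat.mul_le_mul_left (chi G) hivs_le
    omega
  exact ⟨h9, hivs3, hvs2, hchi3⟩
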